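/- Let P be a ring, x ∈ P a non-zerodivisor, S₀ a submodule of a module S such that x²·S₀ ⊆ x·S, and suppose R ≅ x·S and R₀ ≅ x²·S₀ under a fixed isomorphism. Then the kernel of the restriction map Hom(x·S, B) → Hom(x²·S₀, B) is naturally isomorphic to Hom(S/S₀, B) for any module B on which x acts as a non-zerodivisor. -/

import Mathlib

/-- let `x` be a non-zerodivisor on a module `S` and on a module `B`
(over a ring `R`), and let `S₀ ⊆ S` be a submodule.  Identify `x·S` with the
submodule `(x)·S ⊆ S` and `x²·S₀` with `(x²)·S₀ ⊆ x·S`.  Then the kernel of the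
restriction map `Hom(x·S, B) → Hom(x²·S₀, B)` is naturally isomorphic to
`Hom(S/S₀, B)`. -/
theorem ker_restriction_iso
    {R : Type*} [CommRing R] (x : R)
    {S B : Type*} [AddCommGroup S] [Module R S] [AddCommGroup B] [Module R B]
    (S0 : Submodule R S)
    (hxS : ∀ s : S, x • s = 0 → s = 0)
    (hxB : ∀ b : B, x • b = 0 → b = 0)
    (hle : (Ideal.span {x ^ 2} : Ideal R) • S0
        ≤ (Ideal.span {x} : Ideal R) • (⊤ : Submodule R S)) :
    Nonempty
      ((LinearMap.ker (LinearMap.lcomp R B (Submodule.inclusion hle)))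
        ≃ₗ[R] ((S ⧸ S0) →ₗ[R] B)) := by
  classical
  set M : Submodule R S := (Ideal.span {x} : Ideal R) • (⊤ : Submodule R S) with hM
  set N : Submodule R S := (Ideal.span {x ^ 2} : Ideal R) • S0 with hN
  have hmem : ∀ s : S, x • s ∈ M :=
    fun s => Submodule.smul_mem_smul (Ideal.mem_span_singleton_self x) trivial
  let ψ : S →ₗ[R] M :=
    { toFun := fun s => ⟨x • s, hmem s⟩
      map_add' := fun a b => by ext; simp [smul_add]
      map_smul' := fun r a => by ext; simp [smul_comm x r]
    }
  have hψ : ∀ s : S, (ψ s : S) = x • s := fun s => rfl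
  have hbij : Function.Bijective ψ := by
    constructor
    · intro a b h
      have h1 : x • a = x • b := congrArg Subtype.val h
      have h2 := hxS (a - b) (by rw [smul_sub, h1, sub_self])
      exact sub_eq_zero.mp h2
    · rintro ⟨m, hm⟩
      have hex : ∃ s : S, x • s = m := by
        refine Submodule.smul_induction_on hm ?_ ?_
        · intro r hr s _
          obtain ⟨c, rfl⟩ := Ideal.mem_span_singleton'.mp hr
          exact ⟨c • s, by rw [smul_smul, mul_comm]⟩
        · rintro a b ⟨s, rfl⟩ ⟨t, rfl⟩
          exact ⟨s + t, by rw [smul_add]⟩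
      obtain ⟨s, hs⟩ := hex
      exact ⟨s, Subtype.ext hs⟩
  let φ : S ≃ₗ[R] M := LinearEquiv.ofBijective ψ hbij
  have key : ∀ n ∈ N, ∃ s ∈ S0, x • s = n := by
    intro n hn
    refine Submodule.smul_induction_on hn ?_ ?_
    · intro r hr s hs
      obtain ⟨c, rfl⟩ := Ideal.mem_span_singleton'.mp hr
      refine ⟨(c * x) • s, S0.smul_mem _ hs, ?_⟩
      rw [smul_smul]
      congr 1
      ring
    · rintro a b ⟨s, hs, rfl⟩ ⟨t, ht, rfl⟩
      exact ⟨s + t, S0.add_mem hs ht, by rw [smul_add]⟩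
  have hker : ∀ f : M →ₗ[R] B,
      f ∈ LinearMap.ker (LinearMap.lcomp R B (Submodule.inclusion hle)) ↔
        ∀ n (hn : n ∈ N), f ⟨n, hle hn⟩ = 0 := by
    intro f
    rw [LinearMap.mem_ker]
    constructor
    · intro h n hn
      have h1 := LinearMap.congr_fun h ⟨n, hn⟩
      simpa [Submodule.inclusion_apply] using h1
    · intro h
      ext ⟨n, hn⟩
      simpa [Submodule.inclusion_apply] using h n hn
  -- the two directions
  have hle0 : ∀ f : (LinearMap.ker (LinearMap.lcomp R B (Submodule.inclusion hle))),
      S0 ≤ LinearMap.ker ((f : M →ₗ[R] B).comp ψ) := by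
    intro f s hs
    rw [LinearMap.mem_ker]
    have hx2 : x • (x • s) ∈ N := by
      have h1 : (x ^ 2) • s ∈ N :=
        Submodule.smul_mem_smul (Ideal.mem_span_singleton_self (x ^ 2)) hs
      have h2 : x • (x • s) = (x ^ 2) • s := by rw [pow_two, mul_smul]
      rw [h2]; exact h1
    apply hxB
    rw [LinearMap.comp_apply]
    have h2 : x • (f : M →ₗ[R] B) (ψ s) = (f : M →ₗ[R] B) (x • ψ s) :=
      (map_smul _ _ _).symm
    rw [h2]
    have h3 : x • ψ s = (⟨x • (x • s), hle hx2⟩ : M) := Subtype.ext rfl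
    rw [h3]
    exact (hker _).mp f.2 _ hx2
  refine ⟨{
      toFun := fun f => S0.liftQ ((f : M →ₗ[R] B).comp ψ) (hle0 f)
      invFun := fun g =>
        ⟨((g.comp S0.mkQ).comp φ.symm.toLinearMap), by
          rw [hker]
          intro n hn
          obtain ⟨s, hsS0, hxs⟩ := key n hn
          have h1 : φ.symm ⟨n, hle hn⟩ = s := by
            rw [LinearEquiv.symm_apply_eq]
            exact Subtype.ext hxs.symm
          simp only [LinearMap.comp_apply, LinearEquiv.coe_coe, h1]
          rw [show S0.mkQ s = 0 from (Submodule.Quotient.mk_eq_zero S0).mpr hsS0]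
          exact map_zero g⟩
      map_add' := by
        intro f g
        apply LinearMap.ext
        intro q
        obtain ⟨s, rfl⟩ := S0.mkQ_surjective q
        simp
      map_smul' := by
        intro c f
        apply LinearMap.ext
        intro q
        obtain ⟨s, rfl⟩ := S0.mkQ_surjective q
        simp
      left_inv := by
        intro f
        apply Subtype.ext
        apply LinearMap.ext
        intro m
        have h1 : ψ (φ.symm m) = m := φ.apply_symm_apply m
        simp only [LinearMap.comp_apply, LinearEquiv.coe_coe, Submodule.mkQ_apply,
          Submodule.liftQ_apply]
        rw [h1]
      right_inv := by
        intro g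
        apply LinearMap.ext
        intro q
        obtain ⟨s, rfl⟩ := S0.mkQ_surjective q
        have h1 : φ.symm (ψ s) = s := φ.symm_apply_apply s
        simp only [LinearMap.comp_apply, Submodule.liftQ_apply, Submodule.mkQ_apply,
          LinearEquiv.coe_coe]
        rw [show φ.symm (ψ s) = s from h1] }⟩
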